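/- Fix θ > 0 and let P_θ f(x) = ∫_ℝ f(z) dN(e^{−θ}x, 1−e^{−2θ})(z). Then for every α > 1 the Harnack inequality (P_θ f(x))^α ≤ P_θ f^α(y) · exp( α e^{−2θ}(x−y)² / (2(α−1)(1−e^{−2θ})) ) holds for all x, y ∈ ℝ and all bounded Borel measurable f : ℝ → [0,∞). -/

import Mathlib

open MeasureTheory ProbabilityTheory Real
open scoped NNReal ENNReal

lemma pdf_rpow_mul (m₁ m₂ : ℝ) (v : ℝ≥0) (hv : 0 < (v:ℝ)) (q z : ℝ) :
    gaussianPDFReal m₁ v z ^ q * gaussianPDFReal m₂ v z ^ (1 - q) =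
      Real.exp (q * (q - 1) * (m₁ - m₂)^2 / (2 * v)) *
        gaussianPDFReal (q * m₁ + (1 - q) * m₂) v z := by
  have hA : (0:ℝ) < (√(2 * π * (v:ℝ)))⁻¹ :=
    inv_pos.2 (Real.sqrt_pos.2 (by positivity))
  have h2v : (2 * (v:ℝ)) ≠ 0 := by positivity
  simp only [gaussianPDFReal]
  rw [Real.mul_rpow hA.le (Real.exp_pos _).le, Real.mul_rpow hA.le (Real.exp_pos _).le,
    ← Real.exp_mul, ← Real.exp_mul]
  have hAe : (√(2 * π * (v:ℝ)))⁻¹ ^ q * (√(2 * π * (v:ℝ)))⁻¹ ^ (1 - q)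
      = (√(2 * π * (v:ℝ)))⁻¹ := by
    rw [← Real.rpow_add hA]
    norm_num
  have hexp : (-(z - m₁)^2/(2*(v:ℝ))) * q + (-(z - m₂)^2/(2*(v:ℝ))) * (1-q)
      = q*(q-1)*(m₁-m₂)^2/(2*(v:ℝ)) + (-(z - (q*m₁+(1-q)*m₂))^2/(2*(v:ℝ))) := by
    field_simp
    ring
  rw [mul_mul_mul_comm, hAe, ← Real.exp_add, hexp, Real.exp_add]
  ring

theorem stmt_10 (θ : ℝ) (hθ : 0 < θ) (α : ℝ) (hα : 1 < α)
    (f : ℝ → ℝ) (hf : Measurable f) (hf0 : ∀ z, 0 ≤ f z) (hfbd : ∃ M, ∀ z, f z ≤ M)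
    (x y : ℝ) :
    (∫ z, f z ∂(gaussianReal (Real.exp (-θ) * x) (Real.toNNReal (1 - Real.exp (-2*θ))))) ^ α ≤
      (∫ z, f z ^ α ∂(gaussianReal (Real.exp (-θ) * y) (Real.toNNReal (1 - Real.exp (-2*θ))))) *
        Real.exp (α * Real.exp (-2*θ) * (x - y)^2 / (2*(α-1)*(1 - Real.exp (-2*θ)))) := by
  obtain ⟨M, hM⟩ := hfbd
  have hα0 : (0:ℝ) < α := lt_trans zero_lt_one hα
  have hα1 : α - 1 ≠ 0 := ne_of_gt (sub_pos.2 hα)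
  set m₁ : ℝ := Real.exp (-θ) * x with hm₁
  set m₂ : ℝ := Real.exp (-θ) * y with hm₂
  have hv0 : (0:ℝ) < 1 - Real.exp (-2*θ) := by
    have : Real.exp (-2*θ) < 1 := Real.exp_lt_one_iff.2 (by linarith)
    linarith
  set v : ℝ≥0 := (1 - Real.exp (-2*θ)).toNNReal with hvdef
  have hvc : (v:ℝ) = 1 - Real.exp (-2*θ) := Real.coe_toNNReal _ hv0.le
  have hvpos : (0:ℝ) < (v:ℝ) := by rw [hvc]; exact hv0
  have hvne : v ≠ 0 := by
    intro h
    rw [h] at hvpos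
    simp at hvpos
  set q : ℝ := α / (α - 1) with hqdef
  have hconj : Real.HolderConjugate α q := Real.HolderConjugate.conjExponent hα
  have hq0 : q ≠ 0 := hconj.symm.ne_zero
  have hqα : -(1/α) * q = 1 - q := by
    rw [hqdef]; field_simp; ring
  -- density functions
  set G₁ : ℝ → ℝ := gaussianPDFReal m₁ v with hG₁
  set G₂ : ℝ → ℝ := gaussianPDFReal m₂ v with hG₂
  have hG₁pos : ∀ z, 0 < G₁ z := fun z => gaussianPDFReal_pos _ _ _ hvne
  have hG₂pos : ∀ z, 0 < G₂ z := fun z => gaussianPDFReal_pos _ _ _ hvne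
  have hG₁m : Measurable G₁ := measurable_gaussianPDFReal _ _
  have hG₂m : Measurable G₂ := measurable_gaussianPDFReal _ _
  -- Hölder pair
  set F₁ : ℝ → ℝ≥0∞ := fun z => ENNReal.ofReal (f z * G₂ z ^ (1/α)) with hF₁
  set F₂ : ℝ → ℝ≥0∞ := fun z => ENNReal.ofReal (G₁ z * G₂ z ^ (-(1/α))) with hF₂
  have hF₁m : Measurable F₁ := by
    apply Measurable.ennreal_ofReal; fun_prop
  have hF₂m : Measurable F₂ := by
    apply Measurable.ennreal_ofReal; fun_prop
  set I₁ : ℝ≥0∞ := ∫⁻ z, ENNReal.ofReal (f z) ∂(gaussianReal m₁ v) with hI₁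
  set I₂ : ℝ≥0∞ := ∫⁻ z, ENNReal.ofReal (f z ^ α) ∂(gaussianReal m₂ v) with hI₂
  set K : ℝ := q * (q - 1) * (m₁ - m₂)^2 / (2 * (v:ℝ)) with hK
  have key := ENNReal.lintegral_mul_le_Lp_mul_Lq (volume : Measure ℝ) hconj
    hF₁m.aemeasurable hF₂m.aemeasurable
  -- identify the three integrals
  have hprod : ∫⁻ z, (F₁ * F₂) z ∂volume = I₁ := by
    rw [hI₁, gaussianReal_of_var_ne_zero _ hvne,
      lintegral_withDensity_eq_lintegral_mul _ (measurable_gaussianPDF _ _)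
        hf.ennreal_ofReal]
    refine lintegral_congr fun z => ?_
    simp only [Pi.mul_apply, gaussianPDF]
    rw [← ENNReal.ofReal_mul (mul_nonneg (hf0 z) (Real.rpow_nonneg (hG₂pos z).le _)),
      ← ENNReal.ofReal_mul (gaussianPDFReal_nonneg _ _ _)]
    congr 1
    have h1 : G₂ z ^ (1/α) * G₂ z ^ (-(1/α)) = 1 := by
      rw [← Real.rpow_add (hG₂pos z)]
      norm_num
    calc f z * G₂ z ^ (1/α) * (G₁ z * G₂ z ^ (-(1/α)))
        = (G₂ z ^ (1/α) * G₂ z ^ (-(1/α))) * (G₁ z * f z) := by ring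
      _ = G₁ z * f z := by rw [h1, one_mul]
  have hfα : ∫⁻ z, F₁ z ^ α ∂volume = I₂ := by
    rw [hI₂, gaussianReal_of_var_ne_zero _ hvne,
      lintegral_withDensity_eq_lintegral_mul _ (measurable_gaussianPDF _ _)
        (by fun_prop : Measurable fun z => ENNReal.ofReal (f z ^ α))]
    refine lintegral_congr fun z => ?_
    simp only [Pi.mul_apply, gaussianPDF]
    rw [ENNReal.ofReal_rpow_of_nonneg
      (mul_nonneg (hf0 z) (Real.rpow_nonneg (hG₂pos z).le _)) hα0.le,
      ← ENNReal.ofReal_mul (hG₂pos z).le]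
    congr 1
    rw [Real.mul_rpow (hf0 z) (Real.rpow_nonneg (hG₂pos z).le _),
      ← Real.rpow_mul (hG₂pos z).le, one_div_mul_cancel hα0.ne', Real.rpow_one]
    ring
  have hgq : ∫⁻ z, F₂ z ^ q ∂volume = ENNReal.ofReal (Real.exp K) := by
    have hpt : ∀ z, F₂ z ^ q
        = ENNReal.ofReal (Real.exp K * gaussianPDFReal (q*m₁+(1-q)*m₂) v z) := by
      intro z
      rw [ENNReal.ofReal_rpow_of_pos (mul_pos (hG₁pos z) (Real.rpow_pos_of_pos (hG₂pos z) _))]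
      congr 1
      rw [Real.mul_rpow (hG₁pos z).le (Real.rpow_nonneg (hG₂pos z).le _),
        ← Real.rpow_mul (hG₂pos z).le, hqα]
      exact pdf_rpow_mul m₁ m₂ v hvpos q z
    simp only [hpt]
    simp_rw [ENNReal.ofReal_mul (Real.exp_nonneg K)]
    rw [lintegral_const_mul _ (measurable_gaussianPDFReal _ _).ennreal_ofReal,
      lintegral_gaussianPDFReal_eq_one _ hvne, mul_one]
  rw [hprod, hfα, hgq] at key
  -- raise to the power α
  set E : ℝ := α * Real.exp (-2*θ) * (x - y)^2 / (2*(α-1)*(1 - Real.exp (-2*θ))) with hE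
  have hKE : K * (1/q * α) = E := by
    have he2 : Real.exp (-θ) * Real.exp (-θ) = Real.exp (-2*θ) := by
      rw [← Real.exp_add]; ring_nf
    have hmm : (m₁ - m₂)^2 = Real.exp (-2*θ) * (x-y)^2 := by
      rw [hm₁, hm₂, ← he2]; ring
    have h1 : (1 - Real.exp (-2*θ)) ≠ 0 := hv0.ne'
    have hαne : α ≠ 0 := hα0.ne'
    have hcoef : q * (q - 1) * (1/q * α) = α / (α - 1) := by
      rw [hqdef]; field_simp; ring
    calc K * (1/q * α)
        = (q * (q - 1) * (1/q * α)) * ((m₁ - m₂)^2 / (2*(v:ℝ))) := by rw [hK]; ring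
      _ = (α/(α-1)) * ((Real.exp (-2*θ) * (x-y)^2) / (2*(1 - Real.exp (-2*θ)))) := by
          rw [hcoef, hmm, hvc]
      _ = E := by rw [hE]; field_simp
  have main : I₁ ^ α ≤ I₂ * ENNReal.ofReal (Real.exp E) := by
    calc I₁ ^ α ≤ (I₂ ^ (1/α) * ENNReal.ofReal (Real.exp K) ^ (1/q)) ^ α :=
          ENNReal.rpow_le_rpow key hα0.le
      _ = I₂ ^ (1/α * α) * ENNReal.ofReal (Real.exp K) ^ (1/q * α) := by
          rw [ENNReal.mul_rpow_of_nonneg _ _ hα0.le, ← ENNReal.rpow_mul, ← ENNReal.rpow_mul]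
      _ = I₂ * ENNReal.ofReal (Real.exp E) := by
          rw [one_div_mul_cancel hα0.ne', ENNReal.rpow_one,
            ENNReal.ofReal_rpow_of_pos (Real.exp_pos _), ← Real.exp_mul, hKE]
  -- finiteness
  have hI₂top : I₂ ≠ ⊤ := by
    have : I₂ ≤ ENNReal.ofReal (M ^ α) := by
      rw [hI₂]
      calc ∫⁻ z, ENNReal.ofReal (f z ^ α) ∂(gaussianReal m₂ v)
          ≤ ∫⁻ _, ENNReal.ofReal (M ^ α) ∂(gaussianReal m₂ v) :=
            lintegral_mono fun z => ENNReal.ofReal_le_ofReal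
              (Real.rpow_le_rpow (hf0 z) (hM z) hα0.le)
        _ = ENNReal.ofReal (M ^ α) := by
            rw [lintegral_const, measure_univ, mul_one]
    exact (lt_of_le_of_lt this ENNReal.ofReal_lt_top).ne
  -- convert to real integrals
  have hint1 : ∫ z, f z ∂(gaussianReal m₁ v) = I₁.toReal := by
    rw [hI₁, integral_eq_lintegral_of_nonneg_ae (Filter.Eventually.of_forall hf0)
      hf.aestronglyMeasurable]
  have hint2 : ∫ z, f z ^ α ∂(gaussianReal m₂ v) = I₂.toReal := by
    rw [hI₂, integral_eq_lintegral_of_nonneg_ae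
      (Filter.Eventually.of_forall fun z => Real.rpow_nonneg (hf0 z) α)
      (by fun_prop : Measurable fun z => f z ^ α).aestronglyMeasurable]
  rw [hint1, hint2]
  have hfin : I₂ * ENNReal.ofReal (Real.exp E) ≠ ⊤ :=
    ENNReal.mul_ne_top hI₂top ENNReal.ofReal_ne_top
  have := ENNReal.toReal_mono hfin main
  rwa [← ENNReal.toReal_rpow, ENNReal.toReal_mul,
    ENNReal.toReal_ofReal (Real.exp_nonneg _)] at this
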